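/- arXiv:1905.04187 — 4 statements merged into one kernel-verified Lean document; each statement's English description precedes it below -/
import Mathlib

section
/- The singular variety 𝒱 does not intersect the domain of convergence 𝒟 of F; that is, no zero of H lies in 𝒟. -/
open MvPolynomial

/-- Coefficients of the power series expansion of `F = G/H` at the origin,
    i.e. the coefficients of the formal power series `G · H⁻¹`. -/
noncomputable def coeffF {n : ℕ} (G H : MvPolynomial (Fin n) ℂ) (i : Fin n →₀ ℕ) : ℂ :=
  MvPowerSeries.coeff i ((G : MvPowerSeries (Fin n) ℂ) * (H : MvPowerSeries (Fin n) ℂ)⁻¹)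

/-- The domain of convergence: interior of the set of points where the family
    `(f_i z^i)` is absolutely summable. -/
noncomputable def domConv {n : ℕ} (G H : MvPolynomial (Fin n) ℂ) : Set (Fin n → ℂ) :=
  interior {z | Summable fun i : Fin n →₀ ℕ => ‖coeffF G H i * ∏ j, z j ^ i j‖}

/-- The singular variety `𝒱 = {z : H(z) = 0}` does not intersect the domain of
    convergence `𝒟` of `F = G/H`. -/
theorem stmt1 {n : ℕ} (hn : 1 ≤ n) (G H : MvPolynomial (Fin n) ℂ)
    (hcop : IsCoprime G H) (hH0 : eval (0 : Fin n → ℂ) H ≠ 0)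
    (z : Fin n → ℂ) (hz : eval z H = 0) :
    z ∉ domConv G H := by
  intro hmem
  classical
  -- the monomial function
  set m : (Fin n →₀ ℕ) → ℂ := fun i => ∏ j, z j ^ i j with hm
  set f : (Fin n →₀ ℕ) → ℂ := fun i => coeffF G H i * m i with hf
  set g : (Fin n →₀ ℕ) → ℂ := fun k => MvPolynomial.coeff k H * m k with hg
  have hmadd : ∀ a b : Fin n →₀ ℕ, m (a + b) = m a * m b := by
    intro a b
    simp only [hm, Finsupp.coe_add, Pi.add_apply, pow_add]
    exact Finset.prod_mul_distrib
  -- summability of f in norm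
  have hfnorm : Summable fun i => ‖f i‖ :=
    interior_subset (s := {z : Fin n → ℂ |
      Summable fun i : Fin n →₀ ℕ => ‖coeffF G H i * ∏ j, z j ^ i j‖}) hmem
  -- g has finite support
  have hgzero : ∀ k ∉ H.support, g k = 0 := by
    intro k hk
    simp only [hg, MvPolynomial.notMem_support_iff.mp hk, zero_mul]
  have hgsum : HasSum g (eval z H) := by
    rw [MvPolynomial.eval_eq' z H]
    exact hasSum_sum_of_ne_finset_zero hgzero
  have hgnorm : Summable fun k => ‖g k‖ := by
    apply summable_of_ne_finset_zero (s := H.support)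
    intro k hk
    rw [hgzero k hk, norm_zero]
  -- the constant coefficient of H is nonzero
  have hc : MvPowerSeries.constantCoeff (H : MvPowerSeries (Fin n) ℂ) ≠ 0 := by
    rwa [← MvPowerSeries.coeff_zero_eq_constantCoeff_apply, MvPolynomial.coeff_coe,
      ← MvPolynomial.constantCoeff_eq, ← MvPolynomial.eval_zero]
  -- the formal identity (G * H⁻¹) * H = G
  have hGH : ((G : MvPowerSeries (Fin n) ℂ) * (H : MvPowerSeries (Fin n) ℂ)⁻¹) *
      (H : MvPowerSeries (Fin n) ℂ) = (G : MvPowerSeries (Fin n) ℂ) := by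
    rw [mul_assoc, MvPowerSeries.inv_mul_cancel _ hc, mul_one]
  -- Cauchy product
  have hprod : Summable (fun x : (Fin n →₀ ℕ) × (Fin n →₀ ℕ) => f x.1 * g x.2) :=
    summable_mul_of_summable_norm hfnorm hgnorm
  have key : ((∑' i, f i) * ∑' k, g k) =
      ∑' i, ∑ kl ∈ Finset.HasAntidiagonal.antidiagonal i, f kl.1 * g kl.2 :=
    Summable.tsum_mul_tsum_eq_tsum_sum_antidiagonal hfnorm.of_norm hgnorm.of_norm hprod
  have hinner : ∀ i : Fin n →₀ ℕ,
      (∑ kl ∈ Finset.HasAntidiagonal.antidiagonal i, f kl.1 * g kl.2) = MvPolynomial.coeff i G * m i := by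
    intro i
    have : ∀ kl ∈ Finset.HasAntidiagonal.antidiagonal i,
        f kl.1 * g kl.2 = (coeffF G H kl.1 * MvPolynomial.coeff kl.2 H) * m i := by
      intro kl hkl
      rw [Finset.HasAntidiagonal.mem_antidiagonal] at hkl
      simp only [hf, hg]
      rw [← hkl, hmadd]
      ring
    rw [Finset.sum_congr rfl this, ← Finset.sum_mul]
    congr 1
    have := congrArg (MvPowerSeries.coeff i) hGH
    rwa [MvPowerSeries.coeff_mul, MvPolynomial.coeff_coe] at this
    -- the sum over the antidiagonal matches coeff_mul
  -- conclude eval z G = 0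
  have hGsum : HasSum (fun i => MvPolynomial.coeff i G * m i) (eval z G) := by
    rw [MvPolynomial.eval_eq' z G]
    apply hasSum_sum_of_ne_finset_zero
    intro i hi
    simp [MvPolynomial.notMem_support_iff.mp hi]
  have hG0 : eval z G = 0 := by
    have h1 : (∑' k, g k) = 0 := by rw [hgsum.tsum_eq, hz]
    have h2 : (∑' i, MvPolynomial.coeff i G * m i) = eval z G := hGsum.tsum_eq
    have h3 : (∑' i, ∑ kl ∈ Finset.HasAntidiagonal.antidiagonal i, f kl.1 * g kl.2) =
        ∑' i, MvPolynomial.coeff i G * m i := tsum_congr hinner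
    rw [h1, mul_zero, h3, h2] at key
    exact key.symm
  -- coprimality gives a contradiction
  obtain ⟨a, b, hab⟩ := hcop
  have := congrArg (eval z) hab
  simp [hz, hG0] at this
end

section
/- Let z ∈ 𝒱 be a point all of whose coordinates are nonzero. If z is a local extremum, among points of 𝒱 (with ℂⁿ identified with ℝ^{2n}), of the map Abs : z ↦ |z₁⋯z_n|, then z satisfies the critical-point equations z₁(∂H/∂z₁)(z) = z₂(∂H/∂z₂)(z) = ⋯ = z_n(∂H/∂z_n)(z); that is, z is a critical point. -/
open MvPolynomial ContinuousLinearMap Filter Topology Set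


theorem eval_hasStrictFDerivAt {n : ℕ} (H : MvPolynomial (Fin n) ℂ) (y : Fin n → ℂ) :
    HasStrictFDerivAt (fun x : Fin n → ℂ => eval x H)
      (∑ i, eval y (pderiv i H) • (proj i : (Fin n → ℂ) →L[ℂ] ℂ)) y := by
  induction H using MvPolynomial.induction_on with
  | C a =>
      have h0 : (∑ i, eval y (pderiv i (C a : MvPolynomial (Fin n) ℂ)) • (proj i : (Fin n → ℂ) →L[ℂ] ℂ)) = 0 := by
        rw [Finset.sum_eq_zero]
        intro i _
        rw [pderiv_C, map_zero]
        exact zero_smul ℂ (proj i : (Fin n → ℂ) →L[ℂ] ℂ)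
      rw [h0]
      exact (hasStrictFDerivAt_const (eval y (C a : MvPolynomial (Fin n) ℂ)) y).congr_of_eventuallyEq
        (Filter.Eventually.of_forall fun x => by simp)
  | add p q hp hq =>
      have h := hp.add hq
      have key : ∀ {f g : (Fin n → ℂ) → ℂ} {f' g' : (Fin n → ℂ) →L[ℂ] ℂ}, f = g → f' = g' →
          HasStrictFDerivAt g g' y → HasStrictFDerivAt f f' y := by
        rintro _ _ _ _ rfl rfl h; exact h
      refine key ?_ ?_ h
      · funext x; simp
      · rw [← Finset.sum_add_distrib]
        exact Finset.sum_congr rfl fun i _ => by rw [map_add, map_add]; exact add_smul _ _ (proj i : (Fin n → ℂ) →L[ℂ] ℂ)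
  | mul_X p i hp =>
      have hXi : HasStrictFDerivAt (fun x : Fin n → ℂ => x i) (proj i : (Fin n → ℂ) →L[ℂ] ℂ) y :=
        hasStrictFDerivAt_apply i y
      have h := hp.mul hXi
      have key : ∀ {f g : (Fin n → ℂ) → ℂ} {f' g' : (Fin n → ℂ) →L[ℂ] ℂ}, f = g → f' = g' →
          HasStrictFDerivAt g g' y → HasStrictFDerivAt f f' y := by
        rintro _ _ _ _ rfl rfl h; exact h
      refine key ?_ ?_ h
      · funext x; simp
      · refine ContinuousLinearMap.ext fun v => ?_
        have hterm : ∀ i' : Fin n, eval y (pderiv i' (p * X i)) * v i' =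
            (eval y (pderiv i' p) * y i) * v i' + (if i' = i then eval y p * v i' else 0) := by
          intro i'
          rw [pderiv_mul]
          by_cases h' : i' = i
          · subst h'; simp [mul_comm]; ring
          · simp [h', pderiv_X_of_ne (Ne.symm h')]  -- pderiv i' (X i) = 0 when i ≠ i'
        simp only [ContinuousLinearMap.sum_apply, smul_apply, proj_apply, smul_eq_mul,
          ContinuousLinearMap.add_apply]
        calc ∑ i', eval y (pderiv i' (p * X i)) * v i'
            = ∑ i' : Fin n, (eval y (pderiv i' p) * y i * v i'
                + if i' = i then eval y p * v i' else 0) :=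
              Finset.sum_congr rfl fun i' _ => hterm i'
          _ = (∑ i' : Fin n, eval y (pderiv i' p) * y i * v i') + eval y p * v i := by
              rw [Finset.sum_add_distrib,
                Finset.sum_ite_eq' Finset.univ i fun i' => eval y p * v i']
              simp
          _ = eval y p * v i + y i * ∑ i' : Fin n, eval y (pderiv i' p) * v i' := by
              rw [Finset.mul_sum, add_comm]
              congr 1
              exact Finset.sum_congr rfl fun i' _ => by ring

/-- The curve construction: if the 2×2 "Jacobian" determinant in directions `j,k`
is nonzero, there is a curve of variety points whose coordinate product scales. -/
theorem key_curve {n : ℕ} (H : MvPolynomial (Fin n) ℂ) (z : Fin n → ℂ)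
    (hzV : eval z H = 0) {j k : Fin n} (hjk : j ≠ k)
    (hne : z j * eval z (pderiv j H) ≠ z k * eval z (pderiv k H)) :
    ∃ h : ℝ → (Fin n → ℂ), Tendsto h (𝓝 1) (𝓝 z) ∧
      ∀ᶠ t in 𝓝 (1:ℝ), eval (h t) H = 0 ∧ (∏ i, h t i) = (t : ℂ) * ∏ i, z i := by
  classical
  set Dj := eval z (pderiv j H) with hDj
  set Dk := eval z (pderiv k H) with hDk
  set Lin : (ℂ × ℂ) →L[ℂ] (Fin n → ℂ) := ContinuousLinearMap.pi
    (fun i => if i = j then ContinuousLinearMap.fst ℂ ℂ ℂ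
      else if i = k then ContinuousLinearMap.snd ℂ ℂ ℂ else 0) with hLin
  set emb : ℂ × ℂ → (Fin n → ℂ) :=
    fun p i => if i = j then p.1 else if i = k then p.2 else z i with hemb
  set a : ℂ × ℂ := (z j, z k) with ha
  have hemba : emb a = z := by
    funext i
    by_cases hij : i = j
    · subst hij; simp [hemb, ha]
    · by_cases hik : i = k
      · subst hik; simp [hemb, hij, ha]
      · simp [hemb, hij, hik]
  have hembd : HasStrictFDerivAt emb Lin a := by
    rw [hLin]
    apply hasStrictFDerivAt_pi.2
    intro i
    by_cases hij : i = j
    · subst hij; simpa [hemb, hjk] using hasStrictFDerivAt_fst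
    · by_cases hik : i = k
      · subst hik; simpa [hemb, hij] using hasStrictFDerivAt_snd
      · simpa [hemb, hij, hik] using hasStrictFDerivAt_const (z i) a
  have hLinapp : ∀ p : ℂ × ℂ, ∀ i, Lin p i =
      if i = j then p.1 else if i = k then p.2 else 0 := by
    intro p i
    by_cases hij : i = j
    · subst hij; simp [hLin]
    · by_cases hik : i = k
      · subst hik; simp [hLin, hij]
      · simp [hLin, hij, hik]
  -- derivative of F
  set F : ℂ × ℂ → ℂ := fun p => eval (emb p) H with hF
  set bigSum : (Fin n → ℂ) →L[ℂ] ℂ :=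
    ∑ i, eval z (pderiv i H) • (proj i : (Fin n → ℂ) →L[ℂ] ℂ) with hbigSum
  have hFd : HasStrictFDerivAt F (bigSum.comp Lin) a := by
    have h1 : HasStrictFDerivAt (fun x : Fin n → ℂ => eval x H) bigSum (emb a) := by
      rw [hemba, hbigSum]; exact eval_hasStrictFDerivAt H z
    exact h1.comp a hembd
  have hD1 : ∀ p : ℂ × ℂ, (bigSum.comp Lin) p = Dj * p.1 + Dk * p.2 := by
    intro p
    have : (bigSum.comp Lin) p = ∑ i, eval z (pderiv i H) * Lin p i := by
      simp [hbigSum]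
    rw [this]
    have hsplit : ∀ i : Fin n, eval z (pderiv i H) * Lin p i =
        (if i = j then Dj * p.1 else 0) + (if i = k then Dk * p.2 else 0) := by
      intro i
      rw [hLinapp]
      by_cases hij : i = j
      · subst hij; simp [hjk, hDj]
      · by_cases hik : i = k
        · subst hik; simp [hij, hDk]
        · simp [hij, hik]
    rw [Finset.sum_congr rfl fun i _ => hsplit i, Finset.sum_add_distrib,
      Finset.sum_ite_eq' Finset.univ j fun _ => Dj * p.1,
      Finset.sum_ite_eq' Finset.univ k fun _ => Dk * p.2]
    simp
  -- the map G
  set G : ℂ × ℂ → ℂ × ℂ := fun p => (F p, p.1 * p.2) with hG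
  have hmul : HasStrictFDerivAt (fun p : ℂ × ℂ => p.1 * p.2)
      (a.1 • ContinuousLinearMap.snd ℂ ℂ ℂ + a.2 • ContinuousLinearMap.fst ℂ ℂ ℂ) a :=
    hasStrictFDerivAt_fst.mul hasStrictFDerivAt_snd
  set M : (ℂ × ℂ) →L[ℂ] (ℂ × ℂ) := (bigSum.comp Lin).prod
    (a.1 • ContinuousLinearMap.snd ℂ ℂ ℂ + a.2 • ContinuousLinearMap.fst ℂ ℂ ℂ) with hM
  have hGd : HasStrictFDerivAt G M a := HasStrictFDerivAt.prodMk hFd hmul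
  -- M is injective
  have hδ : z j * Dj - z k * Dk ≠ 0 := sub_ne_zero.mpr hne
  have hker : ∀ p : ℂ × ℂ, M p = 0 → p = 0 := by
    intro p hp
    have h1 : Dj * p.1 + Dk * p.2 = 0 := by
      have := congrArg Prod.fst hp
      simpa [hM, hD1 p] using this
    have h2 : z j * p.2 + z k * p.1 = 0 := by
      have := congrArg Prod.snd hp
      simpa [hM, smul_eq_mul] using this
    have hp1 : (z j * Dj - z k * Dk) * p.1 = 0 := by linear_combination z j * h1 - Dk * h2
    have hp2 : (z j * Dj - z k * Dk) * p.2 = 0 := by linear_combination Dj * h2 - z k * h1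
    have : p.1 = 0 := by
      rcases mul_eq_zero.mp hp1 with h | h
      · exact absurd h hδ
      · exact h
    have h2' : p.2 = 0 := by
      rcases mul_eq_zero.mp hp2 with h | h
      · exact absurd h hδ
      · exact h
    exact Prod.ext this h2'
  have hinj : Function.Injective M.toLinearMap := by
    rw [← LinearMap.ker_eq_bot, LinearMap.ker_eq_bot']
    intro p hp
    exact hker p hp
  have hsurj : Function.Surjective M.toLinearMap :=
    (LinearMap.injective_iff_surjective).mp hinj
  set e : (ℂ × ℂ) ≃ₗ[ℂ] (ℂ × ℂ) := LinearEquiv.ofBijective M.toLinearMap ⟨hinj, hsurj⟩ with he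
  set e' : (ℂ × ℂ) ≃L[ℂ] (ℂ × ℂ) := e.toContinuousLinearEquiv with he'
  have hcoe : (e' : (ℂ × ℂ) →L[ℂ] (ℂ × ℂ)) = M :=
    ContinuousLinearMap.ext fun p => rfl
  have hGd' : HasStrictFDerivAt G (e' : (ℂ × ℂ) →L[ℂ] (ℂ × ℂ)) a := by
    rw [hcoe]; exact hGd
  set g : ℂ × ℂ → ℂ × ℂ := hGd'.localInverse G e' a with hg
  -- facts about G a
  set c : ℂ := z j * z k with hc
  have hGa : G a = (0, c) := by
    simp [hG, hF, hemba, hzV, hc, ha, show emb (z j, z k) = z from hemba]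
  set q : ℝ → ℂ × ℂ := fun t => (0, (t : ℂ) * c) with hq
  have htendq : Tendsto q (𝓝 1) (𝓝 (G a)) := by
    rw [hGa]
    have hcont : Continuous q := by
      apply continuous_const.prodMk
      exact (Complex.continuous_ofReal.mul continuous_const)
    have := hcont.tendsto 1
    simpa [hq] using this
  have hright : ∀ᶠ t in 𝓝 (1:ℝ), G (g (q t)) = q t :=
    htendq.eventually hGd'.eventually_right_inverse
  -- the curve
  refine ⟨fun t => emb (g (q t)), ?_, ?_⟩
  · have t1 : Tendsto (fun t => g (q t)) (𝓝 1) (𝓝 a) := by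
      have t0 : Tendsto g (𝓝 (G a)) (𝓝 a) := hGd'.localInverse_tendsto
      exact t0.comp htendq
    have embcont : Continuous emb := by
      apply continuous_pi
      intro i
      by_cases hij : i = j
      · subst hij; simpa [hemb, hjk] using (continuous_fst : Continuous fun p : ℂ × ℂ => p.1)
      · by_cases hik : i = k
        · subst hik; simpa [hemb, hij] using (continuous_snd : Continuous fun p : ℂ × ℂ => p.2)
        · simpa [hemb, hij, hik] using (continuous_const : Continuous fun _ : ℂ × ℂ => z i)
    have := (embcont.tendsto a).comp t1
    rwa [hemba] at this
  · -- product formula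
    have hembu : ∀ p : ℂ × ℂ, emb p = Function.update (Function.update z j p.1) k p.2 := by
      intro p; funext i
      by_cases hik : i = k
      · subst hik; simp [hemb, Ne.symm hjk]
      · by_cases hij : i = j
        · subst hij; simp [hemb, hik, Function.update_of_ne hik,
            Function.update_self]
        · simp [hemb, hij, hik, Function.update_of_ne hik, Function.update_of_ne hij]
    have hjmem : j ∈ Finset.univ \ {k} := by simp [Finset.mem_sdiff, hjk]
    have hprodemb : ∀ p : ℂ × ℂ, (∏ i, emb p i) =
        p.1 * p.2 * ∏ i ∈ (Finset.univ \ {k}) \ {j}, z i := by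
      intro p
      rw [hembu]
      rw [Finset.prod_update_of_mem (Finset.mem_univ k),
        Finset.prod_update_of_mem hjmem]
      ring
    have hprodz : (∏ i, z i) = c * ∏ i ∈ (Finset.univ \ {k}) \ {j}, z i := by
      have := hprodemb a
      rw [hemba] at this
      rw [this, hc]
    filter_upwards [hright] with t ht
    have h1 : eval (emb (g (q t))) H = 0 := by
      have := congrArg Prod.fst ht
      simpa [hG, hF, hq] using this
    have h2 : (g (q t)).1 * (g (q t)).2 = (t : ℂ) * c := by
      have := congrArg Prod.snd ht
      simpa [hG, hq] using this
    refine ⟨h1, ?_⟩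
    rw [hprodemb, h2, hprodz]
    ring

/-- If `z ∈ 𝒱` has all coordinates nonzero and is a local extremum of
    `Abs : z ↦ |z₁⋯z_n|` on the singular variety `𝒱 = {H = 0}`, then `z` satisfies the
    critical-point equations `z₁ ∂H/∂z₁(z) = ⋯ = z_n ∂H/∂z_n(z)`. -/
theorem stmt4 {n : ℕ} (hn : 1 ≤ n) (H : MvPolynomial (Fin n) ℂ)
    (z : Fin n → ℂ) (hzV : eval z H = 0) (hznz : ∀ j, z j ≠ 0)
    (hext :
      IsLocalMaxOn (fun z : Fin n → ℂ => ‖∏ j, z j‖)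
        {z : Fin n → ℂ | eval z H = 0} z ∨
      IsLocalMinOn (fun z : Fin n → ℂ => ‖∏ j, z j‖)
        {z : Fin n → ℂ | eval z H = 0} z) :
    ∀ j k, z j * eval z (pderiv j H) = z k * eval z (pderiv k H) := by
  intro j k
  by_cases hjk : j = k
  · rw [hjk]
  · by_contra hne
    obtain ⟨h, htend, hev⟩ := key_curve H z hzV hjk hne
    set f : (Fin n → ℂ) → ℝ := fun x => ‖∏ i, x i‖ with hf
    have hfz : 0 < f z := by
      rw [hf]
      apply norm_pos_iff.mpr
      exact Finset.prod_ne_zero_iff.mpr fun i _ => hznz i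
    have habs : ∀ t : ℝ, 0 < t → (∏ i, h t i) = (t : ℂ) * ∏ i, z i →
        f (h t) = t * f z := by
      intro t ht hpr
      rw [hf]
      simp only [hpr, norm_mul, Complex.norm_real, Real.norm_eq_abs, abs_of_pos ht]
    rcases hext with hmax | hmin
    · obtain ⟨U, hUo, hzU, hsub⟩ := mem_nhdsWithin.mp hmax
      have ev1 : ∀ᶠ t in 𝓝[>] (1:ℝ), h t ∈ U :=
        (htend.eventually (hUo.eventually_mem hzU)).filter_mono nhdsWithin_le_nhds
      have ev2 := hev.filter_mono (nhdsWithin_le_nhds (s := Ioi (1:ℝ)))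
      have ev3 : ∀ᶠ t in 𝓝[>] (1:ℝ), t ∈ Ioi 1 := eventually_mem_nhdsWithin
      obtain ⟨t, hU', ⟨hs', hp'⟩, ht⟩ := (ev1.and (ev2.and ev3)).exists
      have hle : f (h t) ≤ f z := hsub ⟨hU', hs'⟩
      rw [habs t (by linarith [mem_Ioi.mp ht]) hp'] at hle
      have := mem_Ioi.mp ht
      nlinarith
    · obtain ⟨U, hUo, hzU, hsub⟩ := mem_nhdsWithin.mp hmin
      have ev1 : ∀ᶠ t in 𝓝[<] (1:ℝ), h t ∈ U :=
        (htend.eventually (hUo.eventually_mem hzU)).filter_mono nhdsWithin_le_nhds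
      have ev2 := hev.filter_mono (nhdsWithin_le_nhds (s := Iio (1:ℝ)))
      have ev3 : ∀ᶠ t in 𝓝[<] (1:ℝ), t ∈ Iio 1 := eventually_mem_nhdsWithin
      have ev4 : ∀ᶠ t in 𝓝[<] (1:ℝ), (0:ℝ) < t :=
        (eventually_gt_nhds (by norm_num : (0:ℝ) < 1)).filter_mono nhdsWithin_le_nhds
      obtain ⟨t, hU', ⟨hs', hp'⟩, ht, ht0⟩ := (ev1.and (ev2.and (ev3.and ev4))).exists
      have hle : f z ≤ f (h t) := hsub ⟨hU', hs'⟩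
      rw [habs t ht0 hp'] at hle
      have := mem_Iio.mp ht
      nlinarith
end

section
/- Let ζ ∈ 𝒱 be a point all of whose coordinates are nonzero, with (∂H/∂z_n)(ζ) ≠ 0. Let U be an open neighbourhood of ζ̂ = (ζ₁,…,ζ_{n−1}) in ℂ^{n−1} and let g : U → ℂ be analytic with g(ζ̂) = ζ_n and H(ẑ, g(ẑ)) = 0 for all ẑ ∈ U. Define ψ(ẑ) = z₁⋯z_{n−1}·g(ẑ) on U. Then ζ satisfies the critical-point equations ζ₁(∂H/∂z₁)(ζ) = ⋯ = ζ_n(∂H/∂z_n)(ζ) if and only if the gradient of ψ vanishes at ζ̂, i.e., (∂ψ/∂z_i)(ζ̂) = 0 for all i = 1,…,n−1. -/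
open MvPolynomial

lemma my_eval_hasFDerivAt {m : ℕ} (H : MvPolynomial (Fin m) ℂ) (x : Fin m → ℂ) :
    HasFDerivAt (fun y : Fin m → ℂ => eval y H)
      (∑ j, eval x (pderiv j H) • (ContinuousLinearMap.proj j : (Fin m → ℂ) →L[ℂ] ℂ)) x := by
  induction H using MvPolynomial.induction_on with
  | C a =>
      simp only [eval_C, pderiv_C, map_zero, zero_smul, Finset.sum_const_zero]
      exact (hasFDerivAt_const (𝕜 := ℂ) a x).congr_fderiv (by ext v; simp)
  | add p q hp hq =>
      simp only [map_add]
      exact (hp.add hq).congr_fderiv (by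
        rw [← Finset.sum_add_distrib]
        exact Finset.sum_congr rfl fun k _ => (add_smul _ _ _).symm)
  | mul_X p j hp =>
      simp only [map_mul, eval_X]
      refine (hp.mul (hasFDerivAt_apply j x)).congr_fderiv ?_
      ext v
      simp only [ContinuousLinearMap.add_apply, ContinuousLinearMap.smul_apply,
        ContinuousLinearMap.sum_apply, ContinuousLinearMap.proj_apply, smul_eq_mul,
        pderiv_mul, map_add, map_mul, eval_X, pderiv_X, Pi.single_apply,
        apply_ite (eval x), map_one, map_zero, mul_ite, mul_one, mul_zero, ite_mul,
        zero_mul, add_mul, Finset.sum_add_distrib, Finset.sum_ite_eq, Finset.mem_univ,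
        if_true, Finset.mul_sum]
      rw [add_comm]
      congr 1
      exact Finset.sum_congr rfl fun k _ => by ring

/-- Let `H` be a polynomial in `n+1 ≥ 2` complex variables, `ζ ∈ 𝒱` with all
    coordinates nonzero and `∂H/∂z_n(ζ) ≠ 0`. Let `g` be analytic on an open
    neighbourhood `U` of `ζ̂ = (ζ₁,…,ζ_{n-1})` with `g(ζ̂) = ζ_n` and
    `H(ẑ, g(ẑ)) = 0` on `U`, and set `ψ(ẑ) = z₁⋯z_{n-1}·g(ẑ)`. Then `ζ` satisfies
    the critical-point equations iff `∇ψ(ζ̂) = 0`. -/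
theorem stmt6 {n : ℕ} (hn : 1 ≤ n) (H : MvPolynomial (Fin (n + 1)) ℂ)
    (ζ : Fin (n + 1) → ℂ) (hζV : eval ζ H = 0) (hζnz : ∀ j, ζ j ≠ 0)
    (hlast : eval ζ (pderiv (Fin.last n) H) ≠ 0)
    (U : Set (Fin n → ℂ)) (hU : IsOpen U) (hζU : Fin.init ζ ∈ U)
    (g : (Fin n → ℂ) → ℂ) (hg : AnalyticOnNhd ℂ g U)
    (hgζ : g (Fin.init ζ) = ζ (Fin.last n))
    (hgH : ∀ zh ∈ U, eval (Fin.snoc zh (g zh)) H = 0) :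
    (∀ j k : Fin (n + 1), ζ j * eval ζ (pderiv j H) = ζ k * eval ζ (pderiv k H)) ↔
      (∀ i : Fin n,
        fderiv ℂ (fun zh : Fin n → ℂ => (∏ l, zh l) * g zh) (Fin.init ζ)
          (Pi.single i 1) = 0) := by
  classical
  set zh0 : Fin n → ℂ := Fin.init ζ with hzh0
  have hgd : HasFDerivAt g (fderiv ℂ g zh0) zh0 :=
    ((hg zh0 hζU).differentiableAt).hasFDerivAt
  set Dg : (Fin n → ℂ) →L[ℂ] ℂ := fderiv ℂ g zh0 with hDgdef
  set P : Fin (n + 1) → ℂ := fun j => eval ζ (pderiv j H) with hPdef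
  set a : Fin n → ℂ := fun i => Dg (Pi.single i 1) with hadef
  have hz : Fin.snoc zh0 (g zh0) = ζ := by
    rw [hgζ]; exact Fin.snoc_init_self ζ
  -- inner map derivative
  set L : (Fin n → ℂ) →L[ℂ] (Fin (n + 1) → ℂ) :=
    ContinuousLinearMap.pi
      (Fin.snoc (fun i : Fin n => (ContinuousLinearMap.proj i : (Fin n → ℂ) →L[ℂ] ℂ)) Dg)
    with hLdef
  have hsnoc : HasFDerivAt (fun zh : Fin n → ℂ => (Fin.snoc zh (g zh) : Fin (n + 1) → ℂ)) L zh0 := by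
    apply hasFDerivAt_pi''
    intro j
    rw [hLdef, ContinuousLinearMap.proj_pi]
    refine Fin.lastCases ?_ ?_ j
    · simp only [Fin.snoc_last]
      exact hgd
    · intro i
      simp only [Fin.snoc_castSucc]
      exact hasFDerivAt_apply i zh0
  have houter : HasFDerivAt (fun y : Fin (n + 1) → ℂ => eval y H)
      (∑ j, P j • (ContinuousLinearMap.proj j : (Fin (n + 1) → ℂ) →L[ℂ] ℂ))
      (Fin.snoc zh0 (g zh0)) := by
    rw [hz]; exact my_eval_hasFDerivAt H ζ
  have hF : HasFDerivAt (fun zh : Fin n → ℂ => eval (Fin.snoc zh (g zh)) H)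
      ((∑ j, P j • (ContinuousLinearMap.proj j : (Fin (n + 1) → ℂ) →L[ℂ] ℂ)).comp L) zh0 :=
    by have := houter.comp zh0 hsnoc; exact this
  have hF0 : (fun zh : Fin n → ℂ => eval (Fin.snoc zh (g zh)) H) =ᶠ[nhds zh0]
      (fun _ => (0 : ℂ)) :=
    Filter.eventuallyEq_of_mem (hU.mem_nhds hζU) hgH
  have hzero : ((∑ j, P j • (ContinuousLinearMap.proj j : (Fin (n + 1) → ℂ) →L[ℂ] ℂ)).comp L) = 0 :=
    (hF.congr_of_eventuallyEq hF0.symm).unique (hasFDerivAt_const (0 : ℂ) zh0)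
  have hkey : ∀ i : Fin n, P i.castSucc + P (Fin.last n) * a i = 0 := by
    intro i
    have h1 := congrArg (fun T : (Fin n → ℂ) →L[ℂ] ℂ => T (Pi.single i 1)) hzero
    simp only [ContinuousLinearMap.comp_apply, ContinuousLinearMap.sum_apply,
      ContinuousLinearMap.smul_apply, ContinuousLinearMap.proj_apply, smul_eq_mul,
      ContinuousLinearMap.zero_apply, hLdef, ContinuousLinearMap.pi_apply] at h1
    rw [Fin.sum_univ_castSucc] at h1
    simp only [Fin.snoc_castSucc, Fin.snoc_last, ContinuousLinearMap.proj_apply,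
      Pi.single_apply, mul_ite, mul_one, mul_zero, Finset.sum_ite_eq, Finset.mem_univ,
      if_true] at h1
    simpa using h1
  have hprod : HasFDerivAt (fun zh : Fin n → ℂ => ∏ l, zh l)
      (∑ l, (∏ k ∈ Finset.univ.erase l, zh0 k) •
        (ContinuousLinearMap.proj l : (Fin n → ℂ) →L[ℂ] ℂ)) zh0 :=
    HasFDerivAt.finset_prod (fun l _ => hasFDerivAt_apply l zh0)
  have hψ : HasFDerivAt (fun zh : Fin n → ℂ => (∏ l, zh l) * g zh)
      ((∏ l, zh0 l) • Dg + g zh0 • (∑ l, (∏ k ∈ Finset.univ.erase l, zh0 k) •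
        (ContinuousLinearMap.proj l : (Fin n → ℂ) →L[ℂ] ℂ))) zh0 :=
    hprod.mul hgd
  have hfd : ∀ i : Fin n,
      fderiv ℂ (fun zh : Fin n → ℂ => (∏ l, zh l) * g zh) zh0 (Pi.single i 1)
        = (∏ l, zh0 l) * a i + ζ (Fin.last n) * ∏ k ∈ Finset.univ.erase i, zh0 k := by
    intro i
    rw [hψ.fderiv]
    simp only [ContinuousLinearMap.add_apply, ContinuousLinearMap.smul_apply, smul_eq_mul,
      ContinuousLinearMap.sum_apply, ContinuousLinearMap.proj_apply, Pi.single_apply,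
      mul_ite, mul_one, mul_zero, Finset.sum_ite_eq, Finset.sum_ite_eq', Finset.mem_univ,
      if_true, hgζ]
    rfl
  have hQ : ∀ i : Fin n, (∏ k ∈ Finset.univ.erase i, zh0 k) ≠ 0 := fun i =>
    Finset.prod_ne_zero_iff.mpr fun k _ => hζnz k.castSucc
  have step : ∀ i : Fin n,
      ((∏ l, zh0 l) * a i + ζ (Fin.last n) * ∏ k ∈ Finset.univ.erase i, zh0 k = 0)
        ↔ ζ i.castSucc * P i.castSucc = ζ (Fin.last n) * P (Fin.last n) := by
    intro i
    have hprodsplit : (∏ l, zh0 l) = zh0 i * ∏ k ∈ Finset.univ.erase i, zh0 k :=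
      (Finset.mul_prod_erase Finset.univ zh0 (Finset.mem_univ i)).symm
    have hk := hkey i
    have hzi : zh0 i = ζ i.castSucc := rfl
    set Q : ℂ := ∏ k ∈ Finset.univ.erase i, zh0 k with hQdef
    constructor
    · intro h
      have h2 : zh0 i * a i + ζ (Fin.last n) = 0 := by
        rcases mul_eq_zero.mp (show Q * (zh0 i * a i + ζ (Fin.last n)) = 0 by
          rw [← h, hprodsplit]; ring) with h' | h'
        · exact absurd h' (hQ i)
        · exact h'
      rw [← hzi]
      linear_combination (-(P (Fin.last n))) * h2 + (zh0 i) * hk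
    · intro hc
      have hc' : zh0 i * P i.castSucc = ζ (Fin.last n) * P (Fin.last n) := hc
      rcases mul_eq_zero.mp (show P (Fin.last n) *
          ((∏ l, zh0 l) * a i + ζ (Fin.last n) * Q) = 0 by
        linear_combination (a i * P (Fin.last n)) * hprodsplit
          + (zh0 i * Q) * hk + (-Q) * hc') with h' | h'
      · exact absurd h' hlast
      · exact h'
  constructor
  · intro hCP i
    rw [hfd i]
    exact (step i).mpr (hCP i.castSucc (Fin.last n))
  · intro hgrad j k
    have hall : ∀ j, ζ j * P j = ζ (Fin.last n) * P (Fin.last n) := by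
      intro j
      refine Fin.lastCases rfl (fun i => ?_) j
      exact (step i).mp (by rw [← hfd i]; exact hgrad i)
    rw [hall j, hall k]
end

section
/- For every point w ∈ ∂𝒟 all of whose coordinates are nonzero, the exponential growth rate of the diagonal coefficient sequence satisfies limsup_{k→∞} |f_{k,…,k}|^{1/k} ≤ |w₁ w₂ ⋯ w_n|^{−1}. -/
open MvPolynomial

/-- The diagonal index `(k, …, k)` as a finitely supported function. -/
noncomputable def diagIdx (n k : ℕ) : Fin n →₀ ℕ :=
  Finsupp.equivFunOnFinite.symm fun _ => k

/-- For any point `w ∈ ∂𝒟` with all coordinates nonzero, the exponential growth rate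
    of the diagonal coefficients satisfies
    `limsup_k |f_{k,…,k}|^{1/k} ≤ |w₁⋯w_n|⁻¹`. -/
theorem stmt14 {n : ℕ} (hn : 1 ≤ n) (G H : MvPolynomial (Fin n) ℂ)
    (hcop : IsCoprime G H) (hH0 : eval (0 : Fin n → ℂ) H ≠ 0)
    (w : Fin n → ℂ) (hw : w ∈ frontier (domConv G H)) (hwnz : ∀ j, w j ≠ 0) :
    Filter.limsup
        (fun k : ℕ => ‖coeffF G H (diagIdx n k)‖ ^ ((k : ℝ)⁻¹))
        Filter.atTop
      ≤ ‖∏ j, w j‖⁻¹ := by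
  set ψ : (Fin n → ℂ) → ℝ := fun z => ‖∏ j, z j‖ with hψdef
  have hψcont : Continuous ψ :=
    continuous_norm.comp (continuous_finset_prod _ fun j _ => continuous_apply j)
  have hψw : 0 < ψ w := by
    apply norm_pos_iff.mpr
    exact Finset.prod_ne_zero_iff.mpr fun j _ => hwnz j
  refine le_of_forall_pos_le_add fun ε hε => ?_
  -- find a point z of the domain of convergence close to w
  have hcontinv : ContinuousAt (fun z => (ψ z)⁻¹) w :=
    hψcont.continuousAt.inv₀ hψw.ne'
  have h1 : ∀ᶠ z in nhds w, (ψ z)⁻¹ < ‖∏ j, w j‖⁻¹ + ε :=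
    hcontinv (Iio_mem_nhds (lt_add_of_pos_right _ hε))
  have h2 : ∀ᶠ z in nhds w, 0 < ψ z :=
    hψcont.continuousAt (Ioi_mem_nhds hψw)
  have hwc : w ∈ closure (domConv G H) := frontier_subset_closure hw
  obtain ⟨z, hz1, hz2⟩ :=
    mem_closure_iff_nhds.mp hwc _ (h1.and h2)
  obtain ⟨hz1a, hz1b⟩ := hz1
  have hsum : Summable fun i : Fin n →₀ ℕ => ‖coeffF G H i * ∏ j, z j ^ i j‖ := by
    rw [domConv] at hz2
    exact interior_subset
      (s := {z : Fin n → ℂ | Summable fun i : Fin n →₀ ℕ => ‖coeffF G H i * ∏ j, z j ^ i j‖}) hz2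
  set C0 : ℝ := ∑' i : Fin n →₀ ℕ, ‖coeffF G H i * ∏ j, z j ^ i j‖ with hC0
  set C : ℝ := max C0 1 with hC
  have hC1 : (1 : ℝ) ≤ C := le_max_right _ _
  have hCpos : (0 : ℝ) < C := lt_of_lt_of_le one_pos hC1
  -- the key coefficient bound
  have hbound : ∀ k : ℕ, ‖coeffF G H (diagIdx n k)‖ * ψ z ^ k ≤ C := by
    intro k
    have h := Summable.le_tsum hsum (diagIdx n k) fun _ _ => norm_nonneg _
    have heq : ‖coeffF G H (diagIdx n k) * ∏ j, z j ^ (diagIdx n k) j‖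
        = ‖coeffF G H (diagIdx n k)‖ * ψ z ^ k := by
      have hd : ∀ j, (diagIdx n k) j = k := by
        intro j; simp [diagIdx]
      rw [norm_mul]
      congr 1
      rw [hψdef]
      simp only [norm_prod]
      rw [← Finset.prod_pow]
      congr 1; ext j
      rw [hd j, norm_pow]
    rw [heq] at h
    exact h.trans (le_max_left _ _)
  -- the comparison sequence
  set b : ℕ → ℝ := fun k => C ^ ((k : ℝ)⁻¹) * (ψ z)⁻¹ with hb
  have hab : ∀ᶠ k : ℕ in Filter.atTop,
      ‖coeffF G H (diagIdx n k)‖ ^ ((k : ℝ)⁻¹) ≤ b k := by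
    filter_upwards [Filter.eventually_ge_atTop 1] with k hk
    have hknz : (k : ℝ) ≠ 0 := Nat.cast_ne_zero.mpr (by omega)
    have hA : ‖coeffF G H (diagIdx n k)‖ ≤ C * ((ψ z)⁻¹) ^ k := by
      rw [inv_pow, ← div_eq_mul_inv, le_div_iff₀ (pow_pos hz1b k)]
      exact hbound k
    calc ‖coeffF G H (diagIdx n k)‖ ^ ((k : ℝ)⁻¹)
        ≤ (C * ((ψ z)⁻¹) ^ k) ^ ((k : ℝ)⁻¹) := by
          apply Real.rpow_le_rpow (norm_nonneg _) hA (by positivity)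
      _ = C ^ ((k : ℝ)⁻¹) * (((ψ z)⁻¹) ^ k) ^ ((k : ℝ)⁻¹) := by
          apply Real.mul_rpow hCpos.le (by positivity)
      _ = b k := by
          rw [hb]
          congr 1
          rw [← Real.rpow_natCast ((ψ z)⁻¹) k, ← Real.rpow_mul (by positivity),
            mul_inv_cancel₀ hknz, Real.rpow_one]
  have hbtend : Filter.Tendsto b Filter.atTop (nhds ((ψ z)⁻¹)) := by
    have h1' : Filter.Tendsto (fun k : ℕ => C ^ ((k : ℝ)⁻¹)) Filter.atTop (nhds 1) := by
      have := (Real.continuousAt_const_rpow (b := (0:ℝ)) hCpos.ne').tendsto.comp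
        tendsto_inv_atTop_nhds_zero_nat
      simpa [Real.rpow_zero, Function.comp_def] using this
    simpa using h1'.mul tendsto_const_nhds
  have hlim : Filter.limsup b Filter.atTop = (ψ z)⁻¹ := hbtend.limsup_eq
  have hle : Filter.limsup
        (fun k : ℕ => ‖coeffF G H (diagIdx n k)‖ ^ ((k : ℝ)⁻¹))
        Filter.atTop ≤ Filter.limsup b Filter.atTop := by
    exact Filter.limsup_le_limsup hab
      (Filter.isCoboundedUnder_le_of_le _ (x := 0) fun k => by positivity)
      hbtend.isBoundedUnder_le
  rw [hlim] at hle
  exact hle.trans hz1a.le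
end
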